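/- For each λ ∈ ℝ∖{0}, the map π_λ defined by (π_λ(𝒫,𝒬,𝒮) f)(X) = e^{2πiλ(𝒮 + ⟨𝒬, X⊙((1/2)𝒫)⟩)} f(X⊙𝒫) defines a unitary representation of the Dynin-Folland group 𝐇_{n,2} on L²(ℝ^{2n+1}): each operator is unitary and π_λ(g)π_λ(g') = π_λ(g·g'). -/
import Mathlib


open Real Complex MeasureTheory

noncomputable section

abbrev Hgrp (n : ℕ) := (Fin n → ℝ) × (Fin n → ℝ) × ℝ

def hdot {n : ℕ} (p q : Fin n → ℝ) : ℝ := ∑ i, p i * q i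

/-- The Heisenberg group law on `ℝ^{2n+1}`. -/
def hmul {n : ℕ} (X Y : Hgrp n) : Hgrp n :=
  (X.1 + Y.1, X.2.1 + Y.2.1,
    X.2.2 + Y.2.2 + (1 / 2) * (hdot X.1 Y.2.1 - hdot X.2.1 Y.1))

/-- The Heisenberg Lie bracket on `ℝ^{2n+1}`. -/
def hbr {n : ℕ} (X Y : Hgrp n) : Hgrp n := (0, 0, hdot X.1 Y.2.1 - hdot X.2.1 Y.1)

/-- `ad*(𝒫)(𝒬') = (z'v, -z'u, 0)` for `𝒫 = (u,v,w)`, `𝒬' = (x',y',z')`. -/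
def adstar {n : ℕ} (P Q : Hgrp n) : Hgrp n := (Q.2.2 • P.2.1, -(Q.2.2 • P.1), 0)

/-- The standard inner product on `ℝ^{2n+1}`. -/
def hinner {n : ℕ} (X Y : Hgrp n) : ℝ := hdot X.1 Y.1 + hdot X.2.1 Y.2.1 + X.2.2 * Y.2.2

/-- Elements `(𝒫, 𝒬, 𝒮)` of the Dynin-Folland Lie algebra/group. -/
abbrev DF (n : ℕ) := Hgrp n × Hgrp n × ℝ

/-- The Dynin-Folland Lie bracket. -/
def dfbr {n : ℕ} (A B : DF n) : DF n :=
  (hbr A.1 B.1,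
   (1 / 2 : ℝ) • (adstar A.1 B.2.1 - adstar B.1 A.2.1),
   hinner A.1 B.2.1 - hinner A.2.1 B.1)

/-- The Dynin-Folland group law. -/
def dfmul {n : ℕ} (A B : DF n) : DF n :=
  (hmul A.1 B.1,
   A.2.1 + B.2.1 + (1 / 4 : ℝ) • (adstar A.1 B.2.1 - adstar B.1 A.2.1),
   A.2.2 + B.2.2 + (1 / 2) * (hinner A.1 B.2.1 - hinner A.2.1 B.1)
     - (1 / 8) * hinner (A.2.1 - B.2.1) (hbr A.1 B.1))

/-- The generic representation `π_l` of the Dynin-Folland group: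
`(π_l(𝒫,𝒬,𝒮) f)(X) = e^{2πil(𝒮 + ⟨𝒬, X⊙((1/2)𝒫)⟩)} f(X⊙𝒫)`. -/
def piAct (n : ℕ) (l : ℝ) (g : DF n) (f : Hgrp n → ℂ) : Hgrp n → ℂ :=
  fun X => Complex.exp (2 * (π : ℂ) * Complex.I * (l : ℂ) *
      ((g.2.2 : ℂ) + (hinner g.2.1 (hmul X ((1 / 2 : ℝ) • g.1)) : ℂ))) * f (hmul X g.1)

variable {n : ℕ}

-- auxiliary simp lemmas
variable {n : ℕ}

@[simp] lemma hdot_add_left (a b c : Fin n → ℝ) : hdot (a + b) c = hdot a c + hdot b c := by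
  simp [hdot, add_mul, Finset.sum_add_distrib]

@[simp] lemma hdot_add_right (a b c : Fin n → ℝ) : hdot a (b + c) = hdot a b + hdot a c := by
  simp [hdot, mul_add, Finset.sum_add_distrib]

@[simp] lemma hdot_smul_left (r : ℝ) (a b : Fin n → ℝ) : hdot (r • a) b = r * hdot a b := by
  simp [hdot, Finset.mul_sum, mul_assoc]

@[simp] lemma hdot_smul_right (r : ℝ) (a b : Fin n → ℝ) : hdot a (r • b) = r * hdot a b := by
  simp only [hdot, Pi.smul_apply, smul_eq_mul, Finset.mul_sum]
  exact Finset.sum_congr rfl fun i _ => by ring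

@[simp] lemma hdot_neg_left (a b : Fin n → ℝ) : hdot (-a) b = -hdot a b := by
  simp [hdot, Finset.sum_neg_distrib]

@[simp] lemma hdot_neg_right (a b : Fin n → ℝ) : hdot a (-b) = -hdot a b := by
  simp [hdot]

@[simp] lemma hdot_zero_left (b : Fin n → ℝ) : hdot (0 : Fin n → ℝ) b = 0 := by simp [hdot]
@[simp] lemma hdot_zero_right (a : Fin n → ℝ) : hdot a (0 : Fin n → ℝ) = 0 := by simp [hdot]

lemma hdot_comm (a b : Fin n → ℝ) : hdot a b = hdot b a := by
  simp [hdot, mul_comm]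

lemma hmul_assoc (X Y Z : Hgrp n) : hmul (hmul X Y) Z = hmul X (hmul Y Z) := by
  obtain ⟨a, b, c⟩ := X; obtain ⟨d, e, f⟩ := Y; obtain ⟨g, h, i⟩ := Z
  simp only [hmul, Prod.mk.injEq]
  refine ⟨by abel, by abel, ?_⟩
  simp; ring

@[simp] lemma hmul_zero (X : Hgrp n) : hmul X (0 : Hgrp n) = X := by
  simp [hmul, Prod.ext_iff]

@[simp] lemma hmul_neg (X : Hgrp n) : hmul X (-X) = 0 := by
  obtain ⟨a, b, c⟩ := X
  simp [hmul, Prod.ext_iff, hdot_comm a b]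

example (X : Hgrp n) : True := trivial

@[simp] lemma hmul_neg' (X : Hgrp n) : hmul (-X) X = 0 := by
  obtain ⟨a, b, c⟩ := X
  simp [hmul, Prod.ext_iff, hdot_comm a b]

lemma measurable_hdot_left (v : Fin n → ℝ) : Measurable fun a : Fin n → ℝ => hdot a v := by
  unfold hdot
  exact Finset.measurable_sum _ fun i _ => (measurable_pi_apply i).mul_const _

lemma mp_hmul (P : Hgrp n) :
    MeasurePreserving (fun X : Hgrp n => hmul X P) volume volume := by
  have hm1 : Measurable (Function.uncurry fun (a : Fin n → ℝ) (c : (Fin n → ℝ) × ℝ) =>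
      (c.1 + P.2.1, c.2 + (P.2.2 + (1/2) * (hdot a P.2.1 - hdot c.1 P.1)))) := by
    apply Measurable.prod
    · exact (measurable_fst.comp measurable_snd).add_const _
    · exact (measurable_snd.comp measurable_snd).add
        ((((measurable_hdot_left P.2.1).comp measurable_fst).sub
          ((measurable_hdot_left P.1).comp (measurable_fst.comp measurable_snd))).const_mul
          _ |>.const_add _)
  have hga : ∀ a : Fin n → ℝ,
      Measure.map (fun c : (Fin n → ℝ) × ℝ =>
        (c.1 + P.2.1, c.2 + (P.2.2 + (1/2) * (hdot a P.2.1 - hdot c.1 P.1))))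
        (volume : Measure ((Fin n → ℝ) × ℝ)) = volume := by
    intro a
    have hm2 : Measurable (Function.uncurry fun (b : Fin n → ℝ) (t : ℝ) =>
        t + (P.2.2 + (1/2) * (hdot a P.2.1 - hdot b P.1))) := by
      exact measurable_snd.add
        ((measurable_const.sub ((measurable_hdot_left P.1).comp measurable_fst)).const_mul
          _ |>.const_add _)
    have := MeasurePreserving.skew_product (μa := volume) (μb := volume)
      (μc := (volume : Measure ℝ)) (μd := (volume : Measure ℝ))
      (measurePreserving_add_right volume P.2.1) hm2
      (ae_of_all _ fun b => (measurePreserving_add_right volume _).map_eq)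
    rw [show (volume : Measure ((Fin n → ℝ) × ℝ)) = Measure.prod volume volume from rfl]
    exact this.map_eq
  have key := MeasurePreserving.skew_product (μa := volume) (μb := volume)
    (μc := (volume : Measure ((Fin n → ℝ) × ℝ))) (μd := volume)
    (measurePreserving_add_right volume P.1) hm1 (ae_of_all _ hga)
  have heq : (fun X : Hgrp n => hmul X P) =
      (fun p : (Fin n → ℝ) × ((Fin n → ℝ) × ℝ) =>
        (p.1 + P.1,
          (fun (a : Fin n → ℝ) (c : (Fin n → ℝ) × ℝ) =>
            (c.1 + P.2.1, c.2 + (P.2.2 + (1/2) * (hdot a P.2.1 - hdot c.1 P.1)))) p.1 p.2)) := by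
    funext X
    simp only [hmul, add_assoc]
  rw [heq, Measure.volume_eq_prod]
  exact key

def rTr (P : Hgrp n) : Hgrp n ≃ᵐ Hgrp n where
  toFun X := hmul X P
  invFun X := hmul X (-P)
  left_inv X := by show hmul (hmul X P) (-P) = X; rw [hmul_assoc]; simp
  right_inv X := by show hmul (hmul X (-P)) P = X; rw [hmul_assoc]; simp
  measurable_toFun := (mp_hmul P).measurable
  measurable_invFun := (mp_hmul (-P)).measurable

lemma exp_key (g g' : DF n) (X : Hgrp n) :
    (g.2.2 + hinner g.2.1 (hmul X ((1/2 : ℝ) • g.1)))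
      + (g'.2.2 + hinner g'.2.1 (hmul (hmul X g.1) ((1/2 : ℝ) • g'.1)))
    = (dfmul g g').2.2 + hinner (dfmul g g').2.1 (hmul X ((1/2 : ℝ) • (dfmul g g').1)) := by
  obtain ⟨⟨u, v, w⟩, ⟨x, y, z⟩, s⟩ := g
  obtain ⟨⟨u', v', w'⟩, ⟨x', y', z'⟩, s'⟩ := g'
  obtain ⟨a, b, c⟩ := X
  simp only [dfmul, hmul, hinner, hbr, adstar, Prod.fst_add, Prod.snd_add, Prod.fst_sub,
    Prod.snd_sub, Prod.smul_fst, Prod.smul_snd, Prod.smul_mk, Prod.fst_neg, Prod.snd_neg, Prod.neg_mk, neg_zero, Prod.mk_add_mk, Prod.mk_sub_mk,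
    smul_eq_mul, hdot_add_left, hdot_add_right, hdot_smul_left, hdot_smul_right,
    hdot_neg_left, hdot_neg_right, hdot_zero_left, hdot_zero_right, Pi.add_apply,
    neg_smul, sub_eq_add_neg, hdot_comm u' a, hdot_comm u' b, hdot_comm v' a, hdot_comm v' b,
    hdot_comm x' a, hdot_comm x' b, hdot_comm y' a, hdot_comm y' b,
    hdot_comm u' u, hdot_comm u' v, hdot_comm v' u, hdot_comm v' v,
    hdot_comm x' u, hdot_comm x' v, hdot_comm y' u, hdot_comm y' v,
    hdot_comm x u, hdot_comm x v, hdot_comm y u, hdot_comm y v,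
    hdot_comm x a, hdot_comm x b, hdot_comm y a, hdot_comm y b,
    hdot_comm x u', hdot_comm x v', hdot_comm y u', hdot_comm y v',
    hdot_comm v u, hdot_comm b a, hdot_comm u a, hdot_comm u b,
    hdot_comm v a, hdot_comm v b, hdot_comm u' v, hdot_comm v' u']
  ring

/-- For `l ≠ 0`, `π_l` is a unitary representation of `𝐇_{n,2}` on `L²(ℝ^{2n+1})`:
each operator is an `L²`-isometry, `π_l` of the identity is the identity, and
`π_l(g) π_l(g') = π_l(g·g')`. -/
theorem piAct_unitary_representation (n : ℕ) (l : ℝ) (hl : l ≠ 0) :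
    (∀ (g : DF n) (f : Hgrp n → ℂ),
      ∫ X : Hgrp n, ‖piAct n l g f X‖ ^ 2 = ∫ X : Hgrp n, ‖f X‖ ^ 2) ∧
    (∀ f : Hgrp n → ℂ, piAct n l ((0, 0, 0) : DF n) f = f) ∧
    (∀ (g g' : DF n) (f : Hgrp n → ℂ),
      piAct n l g (piAct n l g' f) = piAct n l (dfmul g g') f) := by
  refine ⟨?_, ?_, ?_⟩
  · intro g f
    have h : ∀ X : Hgrp n, ‖piAct n l g f X‖ ^ 2 = ‖f (hmul X g.1)‖ ^ 2 := by
      intro X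
      unfold piAct
      rw [norm_mul]
      have he : (2 * (π : ℂ) * Complex.I * (l : ℂ) *
          ((g.2.2 : ℂ) + ((hinner g.2.1 (hmul X ((1 / 2 : ℝ) • g.1)) : ℝ) : ℂ)))
          = (((2 * π * l * (g.2.2 + hinner g.2.1 (hmul X ((1 / 2 : ℝ) • g.1)))) : ℝ) : ℂ)
            * Complex.I := by
        push_cast; ring
      rw [he, Complex.norm_exp_ofReal_mul_I, one_mul]
    simp_rw [h]
    exact (mp_hmul g.1).integral_comp (rTr g.1).measurableEmbedding (fun Y => ‖f Y‖ ^ 2)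
  · intro f
    funext X
    simp [piAct, hinner]
  · intro g g' f
    funext X
    have hk : (((g.2.2 : ℂ) + ((hinner g.2.1 (hmul X ((1/2 : ℝ) • g.1)) : ℝ) : ℂ))
        + ((g'.2.2 : ℂ) + ((hinner g'.2.1 (hmul (hmul X g.1) ((1/2 : ℝ) • g'.1)) : ℝ) : ℂ)))
        = ((dfmul g g').2.2 : ℂ)
          + ((hinner (dfmul g g').2.1 (hmul X ((1/2 : ℝ) • (dfmul g g').1)) : ℝ) : ℂ) := by
      exact_mod_cast exp_key g g' X
    simp only [piAct]
    rw [← mul_assoc, ← Complex.exp_add, ← mul_add, hk,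
      show hmul (hmul X g.1) g'.1 = hmul X (dfmul g g').1 from hmul_assoc X g.1 g'.1]
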